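/- arXiv:2105.03307 — 2 statements merged into one kernel-verified Lean document; each statement's English description precedes it below -/
import Mathlib

section
/- Given three persistence modules A, B, C over ℝ with a surjection f : A ↠ B whose kernel is ε-interleaved with 0, and an injection g : B ↪ C whose cokernel is ε-interleaved with 0, the composite Φ = g ∘ f : A → C admits a map Ψ : C → A[2ε] such that Φ and Ψ form a 2ε-interleaving between A and C. -/
/-!
STATEMENT 1 (Lemma 5.2 of the paper).

Persistence modules are functors `(ℝ, ≤) ⥤ Vect_F`, here `ℝ ⥤ ModuleCat F`.
A persistence module `E` is `ε`-interleaved with `0` exactly when all its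
transition maps of shift `ε` vanish.  `A ∼_R^ε B` is witnessed by a surjection
`f : A ↠ B` whose (pointwise) kernel has vanishing `ε`-shift transition maps;
`B ∼_L^ε C` is witnessed by an injection `g : B ↪ C` whose cokernel is
`ε`-trivial, i.e. the `ε`-shift transition maps of `C` land in the image of
`g`.  The statement: the composite `Φ = g ∘ f : A → C` admits a natural
`Ψ : C → A[2ε]` such that `Φ` and `Ψ` form a `2ε`-interleaving of `A` and `C`
(both composites equal the `2ε`-shift structure morphisms).
-/

open CategoryTheory

variable (F : Type) [Field F]

theorem right_left_interleaving_composite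
    (A B C : ℝ ⥤ ModuleCat F) (ε : ℝ) (hε : 0 ≤ ε)
    (f : A ⟶ B) (hf_surj : ∀ t : ℝ, Function.Surjective (f.app t))
    (hker : ∀ (t : ℝ) (x : A.obj t), f.app t x = 0 →
      A.map (homOfLE (by linarith : t ≤ t + ε)) x = 0)
    (g : B ⟶ C) (hg_inj : ∀ t : ℝ, Function.Injective (g.app t))
    (hcoker : ∀ (t : ℝ) (y : C.obj t), ∃ z : B.obj (t + ε),
      C.map (homOfLE (by linarith : t ≤ t + ε)) y = g.app (t + ε) z) :
    ∃ Ψ : ∀ t : ℝ, C.obj t ⟶ A.obj (t + ε + ε),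
      (∀ (s t : ℝ) (h : s ≤ t),
        Ψ s ≫ A.map (homOfLE (by linarith : s + ε + ε ≤ t + ε + ε))
          = C.map (homOfLE h) ≫ Ψ t) ∧
      (∀ t : ℝ, (f.app t ≫ g.app t) ≫ Ψ t
          = A.map (homOfLE (by linarith : t ≤ t + ε + ε))) ∧
      (∀ t : ℝ, Ψ t ≫ (f.app (t + ε + ε) ≫ g.app (t + ε + ε))
          = C.map (homOfLE (by linarith : t ≤ t + ε + ε))) := by
  classical
  have compA : ∀ (a b c : ℝ) (h1 : a ≤ b) (h2 : b ≤ c) (x : A.obj a),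
      A.map (homOfLE h2) (A.map (homOfLE h1) x) = A.map (homOfLE (h1.trans h2)) x := by
    intro a b c h1 h2 x
    have e : A.map (homOfLE (h1.trans h2)) = A.map (homOfLE h1) ≫ A.map (homOfLE h2) := by
      rw [← A.map_comp]; rfl
    rw [e, ModuleCat.comp_apply]
  have compC : ∀ (a b c : ℝ) (h1 : a ≤ b) (h2 : b ≤ c) (x : C.obj a),
      C.map (homOfLE h2) (C.map (homOfLE h1) x) = C.map (homOfLE (h1.trans h2)) x := by
    intro a b c h1 h2 x
    have e : C.map (homOfLE (h1.trans h2)) = C.map (homOfLE h1) ≫ C.map (homOfLE h2) := by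
      rw [← C.map_comp]; rfl
    rw [e, ModuleCat.comp_apply]
  have natfg : ∀ (s t : ℝ) (h : s ≤ t) (x : A.obj s),
      g.app t (f.app t (A.map (homOfLE h) x))
        = C.map (homOfLE h) (g.app s (f.app s x)) := by
    intro s t h x
    have h1 := f.naturality (homOfLE h)
    have h2 := g.naturality (homOfLE h)
    have h1' := ConcreteCategory.congr_hom h1 x
    have h2' := ConcreteCategory.congr_hom h2 (f.app s x)
    simp only [ModuleCat.comp_apply] at h1' h2'
    rw [h1', h2']
  have key : ∀ (t : ℝ) (y : C.obj t), ∃ a : A.obj (t + ε),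
      g.app (t + ε) (f.app (t + ε) a)
        = C.map (homOfLE (by linarith : t ≤ t + ε)) y := by
    intro t y
    obtain ⟨z, hz⟩ := hcoker t y
    obtain ⟨a, ha⟩ := hf_surj (t + ε) z
    exact ⟨a, by rw [ha, ← hz]⟩
  let ψ : ∀ t : ℝ, C.obj t → A.obj (t + ε) := fun t y => (key t y).choose
  have hψ : ∀ (t : ℝ) (y : C.obj t), g.app (t + ε) (f.app (t + ε) (ψ t y))
      = C.map (homOfLE (by linarith : t ≤ t + ε)) y := fun t y => (key t y).choose_spec
  have uniq : ∀ (t : ℝ) (y : C.obj t) (a : A.obj (t + ε)),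
      g.app (t + ε) (f.app (t + ε) a) = C.map (homOfLE (by linarith : t ≤ t + ε)) y →
      A.map (homOfLE (by linarith : t + ε ≤ t + ε + ε)) a
        = A.map (homOfLE (by linarith : t + ε ≤ t + ε + ε)) (ψ t y) := by
    intro t y a ha
    have h1 : f.app (t + ε) a = f.app (t + ε) (ψ t y) := hg_inj (t + ε) (by rw [ha, hψ])
    have h2 : f.app (t + ε) (a - ψ t y) = 0 := by rw [map_sub, h1, sub_self]
    have h3 := hker (t + ε) _ h2
    rw [map_sub, sub_eq_zero] at h3
    exact h3
  let Ψ : ∀ t : ℝ, C.obj t ⟶ A.obj (t + ε + ε) := fun t => ModuleCat.ofHom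
    { toFun := fun y => A.map (homOfLE (by linarith : t + ε ≤ t + ε + ε)) (ψ t y)
      map_add' := by
        intro y y'
        rw [← map_add]
        exact (uniq t (y + y') (ψ t y + ψ t y')
          (by rw [map_add, map_add, hψ, hψ, map_add])).symm
      map_smul' := by
        intro c y
        simp only [RingHom.id_apply]
        rw [← map_smul]
        exact (uniq t (c • y) (c • ψ t y)
          (by rw [map_smul, map_smul, hψ, map_smul])).symm }
  refine ⟨Ψ, ?_, ?_, ?_⟩
  · intro s t h
    ext y
    show A.map (homOfLE _) (A.map (homOfLE _) (ψ s y))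
        = A.map (homOfLE _) (ψ t (C.map (homOfLE h) y))
    have hu := uniq t (C.map (homOfLE h) y)
      (A.map (homOfLE (by linarith : s + ε ≤ t + ε)) (ψ s y)) ?_
    · rw [compA (s + ε) (s + ε + ε) (t + ε + ε) (by linarith) (by linarith) (ψ s y)]
      rw [compA (s + ε) (t + ε) (t + ε + ε) (by linarith) (by linarith) (ψ s y)] at hu
      exact hu
    · rw [natfg (s + ε) (t + ε) (by linarith) (ψ s y), hψ]
      rw [compC s (s + ε) (t + ε) (by linarith) (by linarith) y]
      rw [compC s t (t + ε) h (by linarith) y]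
  · intro t
    ext x
    show A.map (homOfLE _) (ψ t (g.app t (f.app t x)))
        = A.map (homOfLE (by linarith : t ≤ t + ε + ε)) x
    have hu := (uniq t (g.app t (f.app t x))
      (A.map (homOfLE (by linarith : t ≤ t + ε)) x)
      (natfg t (t + ε) (by linarith) x)).symm
    rw [hu, compA t (t + ε) (t + ε + ε) (by linarith) (by linarith) x]
  · intro t
    ext y
    show g.app (t + ε + ε) (f.app (t + ε + ε)
        (A.map (homOfLE (by linarith : t + ε ≤ t + ε + ε)) (ψ t y)))
      = C.map (homOfLE (by linarith : t ≤ t + ε + ε)) y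
    rw [natfg (t + ε) (t + ε + ε) (by linarith) (ψ t y), hψ,
      compC t (t + ε) (t + ε + ε) (by linarith) (by linarith) y]
end

section
/- Let K be a finite simplicial complex with a partition 𝒫 of its vertex set, and let 𝒥^K_𝒫 be the (K,𝒫)-join diagram over the simplex Δ^𝒫. Then the geometric realization Δ(𝒥^K_𝒫) is homeomorphic to the geometric realization |K|. -/
/-!
STATEMENT 6 (Lemma: `Δ(𝒥^K_𝒫) ≃ₜ |K|`).

`K` is a finite abstract simplicial complex on a vertex type `V`, and the
partition `𝒫` of the vertex set is given by the fibers of a surjection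
`π : V → B` onto the (finite) type of blocks.  For a block `b`, `K(b)` is the
maximal subcomplex with vertices in the fiber of `b`.  Realizations are spaces
of convex weight functions.  The `(K,𝒫)`-join diagram assigns to a face
`σ ⊆ B` of the simplex `Δ^𝒫` the subspace
`𝒥(σ) = ⋃_{ρ ∈ K, π(ρ) = σ} ∏_{b ∈ σ} Δ^{ρ(b)} ⊆ ∏_{b ∈ σ} |K(b)|`,
with coordinate projections as structure maps.  The geometric realization of
this diagram is the quotient of `⨆_σ Δ^σ × 𝒥(σ)` by the usual blowup
identifications.  The statement: this realization is homeomorphic to `|K|`.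
-/

variable {V B : Type} [Fintype V] [DecidableEq V] [Fintype B] [DecidableEq B]

/-- The support of a weight function. -/
noncomputable def wsupp (x : V → ℝ) : Finset V :=
  Finset.univ.filter (fun v => x v ≠ 0)

/-- `K` is an abstract simplicial complex on the whole vertex type `V`. -/
def IsComplex (K : Finset V → Prop) : Prop :=
  (∀ s, K s → s.Nonempty) ∧
  (∀ s t, K s → t ⊆ s → t.Nonempty → K t) ∧
  (∀ v : V, K {v})

/-- The geometric realization `|K|`. -/
def RealK (K : Finset V → Prop) : Type :=
  {x : V → ℝ // (∀ v, 0 ≤ x v) ∧ (∑ v, x v = 1) ∧ K (wsupp x)}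

noncomputable instance (K : Finset V → Prop) : TopologicalSpace (RealK K) := by
  unfold RealK; infer_instance

/-- The closed face `Δ^σ` of the simplex on the block set `B`. -/
def Simp (σ : Finset B) : Type :=
  {y : B → ℝ // (∀ b, 0 ≤ y b) ∧ (∑ b, y b = 1) ∧ ∀ b, y b ≠ 0 → b ∈ σ}

noncomputable instance (σ : Finset B) : TopologicalSpace (Simp σ) := by
  unfold Simp; infer_instance

/-- The value `𝒥^K_𝒫(σ)` of the join diagram on a face `σ` of `Δ^𝒫`:
tuples of points of the `|K(b)|`, `b ∈ σ`, jointly supported on a single face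
`ρ` of `K` with `π(ρ) = σ`. -/
def JoinD (π : V → B) (K : Finset V → Prop) (σ : Finset B) : Type :=
  {g : {b // b ∈ σ} → (V → ℝ) //
    (∀ b, (∀ v, 0 ≤ g b v) ∧ (∑ v, g b v = 1)) ∧
    ∃ ρ : Finset V, K ρ ∧ Finset.image π ρ = σ ∧
      ∀ b : {b // b ∈ σ}, wsupp (g b) ⊆ ρ.filter (fun v => π v = b.1)}

noncomputable instance (π : V → B) (K : Finset V → Prop) (σ : Finset B) :
    TopologicalSpace (JoinD π K σ) := by
  unfold JoinD; infer_instance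

/-- Total space of the realization of the join diagram, before gluing. -/
def JoinTotal (π : V → B) (K : Finset V → Prop) : Type :=
  Σ σ : {s : Finset B // s.Nonempty}, Simp σ.1 × JoinD π K σ.1

noncomputable instance (π : V → B) (K : Finset V → Prop) :
    TopologicalSpace (JoinTotal π K) := by
  unfold JoinTotal; infer_instance

/-- The blowup identification: a point of the piece over a face `τ ⪯ σ` is
identified with the corresponding point of the piece over `σ` whose simplex
coordinate is supported in `τ` and whose diagram coordinate projects to the
given one. -/
def JoinRel (π : V → B) (K : Finset V → Prop) :
    JoinTotal π K → JoinTotal π K → Prop :=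
  fun t₁ t₂ =>
    ∃ h : t₁.1.1 ⊆ t₂.1.1,
      (t₁.2.1.1 = t₂.2.1.1) ∧
      ∀ (b : B) (hb : b ∈ t₁.1.1), t₁.2.2.1 ⟨b, hb⟩ = t₂.2.2.1 ⟨b, h hb⟩

/-- The geometric realization `Δ(𝒥^K_𝒫)` of the join diagram. -/
def JoinReal (π : V → B) (K : Finset V → Prop) : Type :=
  Quot (JoinRel π K)

noncomputable instance (π : V → B) (K : Finset V → Prop) :
    TopologicalSpace (JoinReal π K) := by
  unfold JoinReal; infer_instance


section JoinHomeoAux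

set_option linter.unusedSectionVars false

open Finset

lemma mem_wsupp {x : V → ℝ} {v : V} : v ∈ wsupp x ↔ x v ≠ 0 := by
  simp [wsupp]

lemma wsupp_nonempty {x : V → ℝ} (hx : ∑ v, x v = 1) : (wsupp x).Nonempty := by
  by_contra h
  rw [Finset.not_nonempty_iff_eq_empty] at h
  have h0 : ∑ v, x v = 0 := by
    apply Finset.sum_eq_zero
    intro v _
    by_contra hv
    have : v ∈ wsupp x := mem_wsupp.mpr hv
    rw [h] at this
    exact absurd this (Finset.notMem_empty v)
  rw [hx] at h0
  norm_num at h0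

/-- The forward map on the total space. -/
noncomputable def jmap (π : V → B) (K : Finset V → Prop) (t : JoinTotal π K) : V → ℝ :=
  fun v => if h : π v ∈ t.1.1 then t.2.1.1 (π v) * t.2.2.1 ⟨π v, h⟩ v else 0

variable {π : V → B} {K : Finset V → Prop}

lemma jmap_nonneg (t : JoinTotal π K) (v : V) : 0 ≤ jmap π K t v := by
  unfold jmap
  split
  · exact mul_nonneg (t.2.1.2.1 _) ((t.2.2.2.1 _).1 v)
  · exact le_refl 0

lemma g_zero (t : JoinTotal π K) (b : {b // b ∈ t.1.1}) {v : V} (h : π v ≠ b.1) :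
    t.2.2.1 b v = 0 := by
  by_contra hc
  obtain ⟨_, ρ, _, _, hsupp⟩ := t.2.2.2
  have hm := hsupp b (mem_wsupp.mpr hc)
  rw [Finset.mem_filter] at hm
  exact h hm.2

lemma g_fiber_sum (t : JoinTotal π K) (b : {b // b ∈ t.1.1}) :
    ∑ v ∈ Finset.univ.filter (fun v => π v = b.1), t.2.2.1 b v = 1 := by
  have hs : ∑ v ∈ Finset.univ.filter (fun v => π v = b.1), t.2.2.1 b v
      = ∑ v, t.2.2.1 b v := by
    apply Finset.sum_subset (Finset.filter_subset _ _)
    intro v _ hv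
    simp only [Finset.mem_filter, Finset.mem_univ, true_and] at hv
    exact g_zero t b hv
  rw [hs]
  exact (t.2.2.2.1 b).2

lemma jmap_fiber_sum (t : JoinTotal π K) (b : B) :
    ∑ v ∈ Finset.univ.filter (fun v => π v = b), jmap π K t v = t.2.1.1 b := by
  by_cases hb : b ∈ t.1.1
  · have hcong : ∀ v ∈ Finset.univ.filter (fun v => π v = b),
        jmap π K t v = t.2.1.1 b * t.2.2.1 ⟨b, hb⟩ v := by
      intro v hv
      simp only [Finset.mem_filter, Finset.mem_univ, true_and] at hv
      subst hv
      unfold jmap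
      rw [dif_pos hb]
    rw [Finset.sum_congr rfl hcong, ← Finset.mul_sum, g_fiber_sum t ⟨b, hb⟩, mul_one]
  · have hy : t.2.1.1 b = 0 := by
      by_contra h
      exact hb (t.2.1.2.2.2 b h)
    rw [hy]
    apply Finset.sum_eq_zero
    intro v hv
    simp only [Finset.mem_filter, Finset.mem_univ, true_and] at hv
    unfold jmap
    rw [dif_neg]
    rw [hv]
    exact hb

lemma jmap_sum (t : JoinTotal π K) : ∑ v, jmap π K t v = 1 := by
  rw [← Finset.sum_fiberwise Finset.univ π (jmap π K t),
    Finset.sum_congr rfl (fun b _ => jmap_fiber_sum t b)]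
  exact t.2.1.2.2.1

lemma jmap_mem (hK : IsComplex K) (t : JoinTotal π K) : K (wsupp (jmap π K t)) := by
  obtain ⟨hg, ρ, hρ, himg, hsupp⟩ := t.2.2.2
  have hsub : wsupp (jmap π K t) ⊆ ρ := by
    intro v hv
    rw [mem_wsupp] at hv
    unfold jmap at hv
    split at hv
    · rename_i h
      have h1 : t.2.2.1 ⟨π v, h⟩ v ≠ 0 := fun h0 => hv (by rw [h0, mul_zero])
      have h2 := hsupp ⟨π v, h⟩ (mem_wsupp.mpr h1)
      exact Finset.filter_subset _ _ h2
    · exact absurd rfl hv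
  exact hK.2.1 ρ _ hρ hsub (wsupp_nonempty (jmap_sum t))

/-- The forward map. -/
noncomputable def jF (hK : IsComplex K) (t : JoinTotal π K) : RealK K :=
  ⟨jmap π K t, fun v => jmap_nonneg t v, jmap_sum t, jmap_mem hK t⟩

lemma jmap_rel {t₁ t₂ : JoinTotal π K} (h : JoinRel π K t₁ t₂) :
    jmap π K t₁ = jmap π K t₂ := by
  obtain ⟨hsub, hy, hg⟩ := h
  funext v
  unfold jmap
  by_cases h1 : π v ∈ t₁.1.1
  · rw [dif_pos h1, dif_pos (hsub h1), hy, hg (π v) h1]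
  · rw [dif_neg h1]
    by_cases h2 : π v ∈ t₂.1.1
    · rw [dif_pos h2]
      have hz : t₂.2.1.1 (π v) = 0 := by
        rw [← hy]
        by_contra hc
        exact h1 (t₁.2.1.2.2.2 _ hc)
      rw [hz, zero_mul]
    · rw [dif_neg h2]

/-- Fiberwise sums of a weight function. -/
noncomputable def canonY (π : V → B) (x : V → ℝ) : B → ℝ :=
  fun b => ∑ v ∈ Finset.univ.filter (fun v => π v = b), x v

lemma canonY_pos {x : RealK K} {b : B} (hb : b ∈ (wsupp x.1).image π) :
    0 < canonY π x.1 b := by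
  obtain ⟨v, hv, rfl⟩ := Finset.mem_image.mp hb
  rw [mem_wsupp] at hv
  have hvpos : 0 < x.1 v := lt_of_le_of_ne (x.2.1 v) (Ne.symm hv)
  refine lt_of_lt_of_le hvpos ?_
  apply Finset.single_le_sum (fun i _ => x.2.1 i)
  simp

lemma canonY_nonneg (x : RealK K) (b : B) : 0 ≤ canonY π x.1 b :=
  Finset.sum_nonneg fun v _ => x.2.1 v

lemma canonY_sum (x : RealK K) : ∑ b, canonY π x.1 b = 1 := by
  unfold canonY
  rw [Finset.sum_fiberwise Finset.univ π x.1]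
  exact x.2.2.1

lemma canonY_supp {x : RealK K} {b : B} (h : canonY π x.1 b ≠ 0) :
    b ∈ (wsupp x.1).image π := by
  obtain ⟨v, hv, hvne⟩ := Finset.exists_ne_zero_of_sum_ne_zero h
  simp only [Finset.mem_filter, Finset.mem_univ, true_and] at hv
  exact Finset.mem_image.mpr ⟨v, mem_wsupp.mpr hvne, hv⟩

/-- The canonical section of the realization map. -/
noncomputable def canon (π : V → B) {K : Finset V → Prop} (x : RealK K) :
    JoinTotal π K :=
  ⟨⟨(wsupp x.1).image π, (wsupp_nonempty x.2.2.1).image π⟩,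
   ⟨canonY π x.1, canonY_nonneg x, canonY_sum x, fun _ h => canonY_supp h⟩,
   ⟨fun b v => if π v = b.1 then x.1 v / canonY π x.1 b.1 else 0,
    by
      constructor
      · intro b
        constructor
        · intro v
          dsimp only
          split
          · exact div_nonneg (x.2.1 v) (canonY_nonneg x b.1)
          · exact le_refl 0
        · have hpos := canonY_pos (x := x) b.2
          rw [← Finset.sum_filter, ← Finset.sum_div]
          exact div_self (ne_of_gt hpos)
      · refine ⟨wsupp x.1, x.2.2.2, rfl, fun b v hv => ?_⟩
        rw [mem_wsupp] at hv
        dsimp only at hv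
        rw [Finset.mem_filter]
        split at hv
        · rename_i hπ
          refine ⟨mem_wsupp.mpr ?_, hπ⟩
          intro h0
          rw [h0, zero_div] at hv
          exact hv rfl
        · exact absurd rfl hv⟩⟩

lemma jmap_canon (x : RealK K) : jmap π K (canon π x) = x.1 := by
  funext v
  unfold jmap canon
  dsimp only
  by_cases h : π v ∈ (wsupp x.1).image π
  · rw [dif_pos h, if_pos rfl]
    have hpos := canonY_pos (x := x) h
    field_simp
  · rw [dif_neg h]
    by_contra hc
    exact h (Finset.mem_image.mpr ⟨v, mem_wsupp.mpr (fun h0 => hc h0.symm), rfl⟩)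

lemma rel_canon (hK : IsComplex K) (t : JoinTotal π K) :
    JoinRel π K (canon π (jF hK t)) t := by
  have hxval : (jF hK t).1 = jmap π K t := rfl
  have hsub : (wsupp (jmap π K t)).image π ⊆ t.1.1 := by
    intro b hb
    obtain ⟨v, hv, rfl⟩ := Finset.mem_image.mp hb
    rw [mem_wsupp] at hv
    unfold jmap at hv
    by_contra hc
    rw [dif_neg hc] at hv
    exact hv rfl
  have hy : canonY π (jmap π K t) = t.2.1.1 := funext fun b => jmap_fiber_sum t b
  refine ⟨hsub, ?_, ?_⟩
  · exact hy
  · intro b hb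
    funext v
    have hbσ : b ∈ t.1.1 := hsub hb
    have hyb : t.2.1.1 b ≠ 0 := by
      obtain ⟨w, hw, hwb⟩ := Finset.mem_image.mp hb
      rw [mem_wsupp] at hw
      have hw2 : jmap π K t w ≠ 0 := hw
      clear hw
      rename' hw2 => hw
      unfold jmap at hw
      intro h0
      by_cases hwσ : π w ∈ t.1.1
      · rw [dif_pos hwσ] at hw
        rw [← hwb] at h0
        rw [h0, zero_mul] at hw
        exact hw rfl
      · rw [dif_neg hwσ] at hw
        exact hw rfl
    show (if π v = b then (jmap π K t) v / canonY π (jmap π K t) b else 0) = _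
    by_cases hvb : π v = b
    · rw [if_pos hvb]
      have : jmap π K t v = t.2.1.1 b * t.2.2.1 ⟨b, hbσ⟩ v := by
        unfold jmap
        subst hvb
        rw [dif_pos hbσ]
      rw [this, hy]
      field_simp
    · rw [if_neg hvb]
      exact (g_zero t ⟨b, hbσ⟩ hvb).symm

lemma jF_continuous (hK : IsComplex K) : Continuous (jF (π := π) hK) := by
  have h : Continuous fun t : JoinTotal π K => jmap π K t := by
    apply continuous_sigma
    intro σ
    apply continuous_pi
    intro v
    show Continuous fun p : Simp σ.1 × JoinD π K σ.1 => jmap π K ⟨σ, p⟩ v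
    unfold jmap
    by_cases h : π v ∈ σ.1
    · simp only [dif_pos h]
      have c1 : Continuous fun p : Simp σ.1 × JoinD π K σ.1 => p.1.1 (π v) :=
        (continuous_apply (π v)).comp (continuous_subtype_val.comp continuous_fst)
      have c2 : Continuous fun p : Simp σ.1 × JoinD π K σ.1 =>
          p.2.1 ⟨π v, h⟩ v :=
        (continuous_apply v).comp ((continuous_apply _).comp
          (continuous_subtype_val.comp continuous_snd))
      exact c1.mul c2
    · simp only [dif_neg h]
      exact continuous_const
  exact h.subtype_mk _

lemma simp_compactSpace (σ : Finset B) : CompactSpace (Simp (B := B) σ) := by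
  have h : IsCompact {y : B → ℝ |
      (∀ b, 0 ≤ y b) ∧ (∑ b, y b = 1) ∧ ∀ b, y b ≠ 0 → b ∈ σ} := by
    apply IsCompact.of_isClosed_subset
      (isCompact_univ_pi fun _ : B => isCompact_Icc (a := (0 : ℝ)) (b := 1))
    · have h1 : IsClosed {y : B → ℝ | ∀ b, 0 ≤ y b} := by
        rw [Set.setOf_forall]
        exact isClosed_iInter fun b => isClosed_le continuous_const (continuous_apply b)
      have h2 : IsClosed {y : B → ℝ | ∑ b, y b = 1} :=
        isClosed_eq (continuous_finset_sum _ fun b _ => continuous_apply b) continuous_const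
      have h3 : IsClosed {y : B → ℝ | ∀ b, y b ≠ 0 → b ∈ σ} := by
        rw [Set.setOf_forall]
        apply isClosed_iInter
        intro b
        by_cases hb : b ∈ σ
        · have he : {y : B → ℝ | y b ≠ 0 → b ∈ σ} = Set.univ := by
            ext y; simp [hb]
          rw [he]; exact isClosed_univ
        · have he : {y : B → ℝ | y b ≠ 0 → b ∈ σ} = {y | y b = 0} := by
            ext y
            simp only [Set.mem_setOf_eq]
            constructor
            · intro h
              by_contra h0
              exact hb (h h0)
            · intro h h0
              exact absurd h h0
          rw [he]; exact isClosed_eq (continuous_apply b) continuous_const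
      exact h1.inter (h2.inter h3)
    · intro y hy
      rw [Set.mem_univ_pi]
      intro b
      refine ⟨hy.1 b, ?_⟩
      rw [← hy.2.1]
      exact Finset.single_le_sum (fun i _ => hy.1 i) (Finset.mem_univ b)
  exact isCompact_iff_compactSpace.mp h

lemma joinD_compactSpace (π : V → B) (K : Finset V → Prop) (σ : Finset B) :
    CompactSpace (JoinD π K σ) := by
  have h : IsCompact {g : {b // b ∈ σ} → V → ℝ |
      (∀ b, (∀ v, 0 ≤ g b v) ∧ (∑ v, g b v = 1)) ∧
      ∃ ρ : Finset V, K ρ ∧ Finset.image π ρ = σ ∧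
        ∀ b : {b // b ∈ σ}, wsupp (g b) ⊆ ρ.filter (fun v => π v = b.1)} := by
    apply IsCompact.of_isClosed_subset
      (isCompact_univ_pi fun _ : {b // b ∈ σ} =>
        isCompact_univ_pi fun _ : V => isCompact_Icc (a := (0 : ℝ)) (b := 1))
    · have hA : IsClosed {g : {b // b ∈ σ} → V → ℝ |
          ∀ b, (∀ v, 0 ≤ g b v) ∧ (∑ v, g b v = 1)} := by
        rw [Set.setOf_forall]
        apply isClosed_iInter
        intro b
        have hA1 : IsClosed {g : {b // b ∈ σ} → V → ℝ | ∀ v, 0 ≤ g b v} := by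
          rw [Set.setOf_forall]
          exact isClosed_iInter fun v =>
            isClosed_le continuous_const ((continuous_apply v).comp (continuous_apply b))
        have hA2 : IsClosed {g : {b // b ∈ σ} → V → ℝ | ∑ v, g b v = 1} :=
          isClosed_eq
            (continuous_finset_sum _ fun v _ => (continuous_apply v).comp (continuous_apply b))
            continuous_const
        exact hA1.inter hA2
      have hB : IsClosed {g : {b // b ∈ σ} → V → ℝ |
          ∃ ρ : Finset V, K ρ ∧ Finset.image π ρ = σ ∧
            ∀ b : {b // b ∈ σ}, wsupp (g b) ⊆ ρ.filter (fun v => π v = b.1)} := by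
        rw [Set.setOf_exists]
        apply isClosed_iUnion_of_finite
        intro ρ
        by_cases hρ : K ρ ∧ Finset.image π ρ = σ
        · have heq : {g : {b // b ∈ σ} → V → ℝ | K ρ ∧ Finset.image π ρ = σ ∧
              ∀ b : {b // b ∈ σ}, wsupp (g b) ⊆ ρ.filter (fun v => π v = b.1)}
              = ⋂ (b : {b // b ∈ σ}) (v : V)
                  (_ : v ∉ ρ.filter (fun v => π v = b.1)), {g | g b v = 0} := by
            ext g
            simp only [Set.mem_setOf_eq, Set.mem_iInter, hρ.1, hρ.2, true_and]
            constructor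
            · intro h b v hv
              by_contra h0
              exact hv (h b (mem_wsupp.mpr h0))
            · intro h b v hv
              rw [mem_wsupp] at hv
              by_contra hv'
              exact hv (h b v hv')
          rw [heq]
          exact isClosed_iInter fun b => isClosed_iInter fun v => isClosed_iInter fun _ =>
            isClosed_eq ((continuous_apply v).comp (continuous_apply b)) continuous_const
        · have heq : {g : {b // b ∈ σ} → V → ℝ | K ρ ∧ Finset.image π ρ = σ ∧
              ∀ b : {b // b ∈ σ}, wsupp (g b) ⊆ ρ.filter (fun v => π v = b.1)} = ∅ := by
            ext g
            simp only [Set.mem_setOf_eq, Set.mem_empty_iff_false, iff_false]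
            intro h
            exact hρ ⟨h.1, h.2.1⟩
          rw [heq]
          exact isClosed_empty
      exact hA.inter hB
    · intro g hg
      rw [Set.mem_univ_pi]
      intro b
      rw [Set.mem_univ_pi]
      intro v
      refine ⟨(hg.1 b).1 v, ?_⟩
      rw [← (hg.1 b).2]
      exact Finset.single_le_sum (fun i _ => (hg.1 b).1 i) (Finset.mem_univ v)
  exact isCompact_iff_compactSpace.mp h

lemma joinTotal_compactSpace (π : V → B) (K : Finset V → Prop) :
    CompactSpace (JoinTotal π K) := by
  haveI := fun σ : {s : Finset B // s.Nonempty} => simp_compactSpace (B := B) σ.1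
  haveI := fun σ : {s : Finset B // s.Nonempty} => joinD_compactSpace π K σ.1
  exact inferInstanceAs
    (CompactSpace (Σ σ : {s : Finset B // s.Nonempty}, Simp σ.1 × JoinD π K σ.1))

end JoinHomeoAux

/-- Lemma 3.3 of the paper: for a finite simplicial complex
`K` with a partition `𝒫` of its vertex set (the fibers of `π`), the geometric
realization of the `(K,𝒫)`-join diagram is homeomorphic to `|K|`. -/
theorem joinReal_homeomorph (π : V → B) (hπ : Function.Surjective π)
    (K : Finset V → Prop) (hK : IsComplex K) :
    Nonempty (JoinReal π K ≃ₜ RealK K) := by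
  classical
  haveI : CompactSpace (JoinTotal π K) := joinTotal_compactSpace π K
  haveI : CompactSpace (JoinReal π K) :=
    inferInstanceAs (CompactSpace (Quot (JoinRel π K)))
  haveI : T2Space (RealK K) :=
    inferInstanceAs (T2Space {x : V → ℝ //
      (∀ v, 0 ≤ x v) ∧ (∑ v, x v = 1) ∧ K (wsupp x)})
  have hresp : ∀ t₁ t₂, JoinRel π K t₁ t₂ → jF hK t₁ = jF hK t₂ :=
    fun t₁ t₂ h => Subtype.ext (jmap_rel h)
  let G : JoinReal π K → RealK K := Quot.lift (jF hK) hresp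
  have hGsurj : Function.Surjective G := by
    intro x
    refine ⟨Quot.mk _ (canon π x), ?_⟩
    show jF hK (canon π x) = x
    exact Subtype.ext (jmap_canon (π := π) x)
  have hGinj : Function.Injective G := by
    intro a b
    induction a using Quot.ind with
    | _ t₁ =>
    induction b using Quot.ind with
    | _ t₂ =>
    intro h
    have hF : jF hK t₁ = jF hK t₂ := h
    have h1 : Quot.mk (JoinRel π K) (canon π (jF hK t₁)) = Quot.mk (JoinRel π K) t₁ :=
      Quot.sound (rel_canon hK t₁)
    have h2 : Quot.mk (JoinRel π K) (canon π (jF hK t₂)) = Quot.mk (JoinRel π K) t₂ :=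
      Quot.sound (rel_canon hK t₂)
    rw [← h1, ← h2, hF]
  let e : JoinReal π K ≃ RealK K := Equiv.ofBijective G ⟨hGinj, hGsurj⟩
  have hcont : Continuous G := continuous_quot_lift hresp (jF_continuous hK)
  exact ⟨Continuous.homeoOfEquivCompactToT2 (f := e) hcont⟩
end
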